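/- If the m × n grid graph (with m, n ≥ 2) contains a total perfect code, then m·n is even. -/

import Mathlib

/-- Adjacency at ℓ¹-distance 1. -/
def latAdj (p q : ℤ × ℤ) : Prop := |p.1 - q.1| + |p.2 - q.2| = 1

/-- The vertex set of the m × n grid. -/
def gridBox (m n : ℤ) : Set (ℤ × ℤ) := Set.Icc 0 (m - 1) ×ˢ Set.Icc 0 (n - 1)

namespace TPC8

open Finset

/-- Sign function: `1` on even integers, `-1` on odd ones. -/
def eps (k : ℤ) : ℤ := if Even k then 1 else -1

lemma eps_of_even {k : ℤ} (h : k % 2 = 0) : eps k = 1 := by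
  rw [eps, if_pos (Int.even_iff.2 h)]

lemma eps_of_odd {k : ℤ} (h : k % 2 = 1) : eps k = -1 := by
  rw [eps, if_neg]
  rw [Int.even_iff]; omega

lemma eps_succ (b : ℤ) : eps (b + 1) = -eps b := by
  rcases Int.emod_two_eq_zero_or_one b with h | h
  · rw [eps_of_even h, eps_of_odd (by omega)]
  · rw [eps_of_odd h, eps_of_even (by omega)]; norm_num

lemma eps_pred (b : ℤ) : eps (b - 1) = -eps b := by
  rcases Int.emod_two_eq_zero_or_one b with h | h
  · rw [eps_of_even h, eps_of_odd (by omega)]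
  · rw [eps_of_odd h, eps_of_even (by omega)]; norm_num

lemma eps_even_sub {c : ℤ} (hc : c % 2 = 0) (x : ℤ) : eps (c - x) = eps x := by
  rcases Int.emod_two_eq_zero_or_one x with h | h
  · rw [eps_of_even h, eps_of_even (by omega)]
  · rw [eps_of_odd h, eps_of_odd (by omega)]

/-- The grid box as a `Finset`. -/
noncomputable def boxF (m n : ℤ) : Finset (ℤ × ℤ) := Finset.Icc 0 (m - 1) ×ˢ Finset.Icc 0 (n - 1)

lemma mem_boxF {m n x y : ℤ} :
    (x, y) ∈ boxF m n ↔ (0 ≤ x ∧ x ≤ m - 1) ∧ (0 ≤ y ∧ y ≤ n - 1) := by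
  rw [boxF, Finset.mem_product, Finset.mem_Icc, Finset.mem_Icc]

lemma mem_gridBox_iff {m n : ℤ} {p : ℤ × ℤ} : p ∈ gridBox m n ↔ p ∈ boxF m n := by
  obtain ⟨x, y⟩ := p
  simp only [gridBox, Set.mem_prod, Set.mem_Icc, mem_boxF]

/-- The code inside the box, as a `Finset`. -/
noncomputable def TF (m n : ℤ) (S : Set (ℤ × ℤ)) : Finset (ℤ × ℤ) :=
  @Finset.filter _ (fun p => p ∈ S) (Classical.decPred _) (boxF m n)

lemma mem_TF {m n : ℤ} {S : Set (ℤ × ℤ)} {p : ℤ × ℤ} :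
    p ∈ TF m n S ↔ p ∈ boxF m n ∧ p ∈ S := by
  rw [TF]; exact @Finset.mem_filter _ _ (Classical.decPred _) _ _

instance latAdj.decidable (p q : ℤ × ℤ) : Decidable (latAdj p q) := by
  unfold latAdj; infer_instance

lemma latAdj_iff {a b c d : ℤ} :
    latAdj (a, b) (c, d) ↔
      (a = c + 1 ∧ b = d) ∨ (a = c - 1 ∧ b = d) ∨ (a = c ∧ b = d + 1) ∨ (a = c ∧ b = d - 1) := by
  show |a - c| + |b - d| = 1 ↔ _
  rcases abs_cases (a - c) with ⟨h1, h2⟩ | ⟨h1, h2⟩ <;>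
    rcases abs_cases (b - d) with ⟨h3, h4⟩ | ⟨h3, h4⟩ <;>
      rw [h1, h3] <;> omega

section Master

variable {m n : ℤ} {S : Set (ℤ × ℤ)}

/-- Sum of the values of `w` on the (out-of-box) neighbours of `s`. -/
noncomputable def Out (m n : ℤ) (w : ℤ × ℤ → ℤ) (s : ℤ × ℤ) : ℤ :=
  (if (s.1 + 1, s.2) ∈ boxF m n then 0 else w (s.1 + 1, s.2)) +
  (if (s.1 - 1, s.2) ∈ boxF m n then 0 else w (s.1 - 1, s.2)) +
  (if (s.1, s.2 + 1) ∈ boxF m n then 0 else w (s.1, s.2 + 1)) +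
  (if (s.1, s.2 - 1) ∈ boxF m n then 0 else w (s.1, s.2 - 1))

lemma count_one (hsub : S ⊆ gridBox m n)
    (hcov : ∀ v ∈ gridBox m n, ∃! u, u ∈ S ∧ latAdj v u)
    {v : ℤ × ℤ} (hv : v ∈ boxF m n) :
    (∑ u ∈ TF m n S, if latAdj v u then (1 : ℤ) else 0) = 1 := by
  obtain ⟨u₀, ⟨hu₀S, hu₀adj⟩, huniq⟩ := hcov v (mem_gridBox_iff.2 hv)
  have hu₀T : u₀ ∈ TF m n S := mem_TF.2 ⟨mem_gridBox_iff.1 (hsub hu₀S), hu₀S⟩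
  have hcong : ∀ u ∈ TF m n S,
      (if latAdj v u then (1:ℤ) else 0) = (if u = u₀ then (1:ℤ) else 0) := by
    intro u hu
    by_cases h : latAdj v u
    · rw [if_pos h, if_pos (huniq u ⟨(mem_TF.1 hu).2, h⟩)]
    · rw [if_neg h, if_neg]
      intro he
      exact h (he ▸ hu₀adj)
  rw [Finset.sum_congr rfl hcong, Finset.sum_ite_eq' _ u₀ (fun _ => (1:ℤ)), if_pos hu₀T]

lemma inner_sum (w : ℤ × ℤ → ℤ)
    (hker : ∀ a b : ℤ, w (a + 1, b) + w (a - 1, b) + w (a, b + 1) + w (a, b - 1) = 0)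
    (u : ℤ × ℤ) :
    (∑ v ∈ boxF m n, if latAdj v u then w v else 0) = -Out m n w u := by
  obtain ⟨c, d⟩ := u
  have hpt : ∀ v : ℤ × ℤ, (if latAdj v (c, d) then w v else 0) =
      (if v = ((c + 1 : ℤ), d) then w v else 0) + (if v = ((c - 1 : ℤ), d) then w v else 0) +
      (if v = ((c : ℤ), d + 1) then w v else 0) + (if v = ((c : ℤ), d - 1) then w v else 0) := by
    intro v
    obtain ⟨a, b⟩ := v
    have hiff : latAdj (a, b) (c, d) ↔
        ((a, b) = ((c + 1 : ℤ), d) ∨ (a, b) = ((c - 1 : ℤ), d) ∨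
         (a, b) = ((c : ℤ), d + 1) ∨ (a, b) = ((c : ℤ), d - 1)) := by
      rw [latAdj_iff]
      simp [Prod.mk.injEq]
    by_cases h : latAdj (a, b) (c, d)
    · rw [if_pos h]
      rcases hiff.1 h with h' | h' | h' | h'
      · rw [h', if_pos rfl, if_neg (by rw [Prod.mk.injEq]; omega),
          if_neg (by rw [Prod.mk.injEq]; omega), if_neg (by rw [Prod.mk.injEq]; omega)]
        ring
      · rw [h', if_neg (by rw [Prod.mk.injEq]; omega), if_pos rfl,
          if_neg (by rw [Prod.mk.injEq]; omega), if_neg (by rw [Prod.mk.injEq]; omega)]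
        ring
      · rw [h', if_neg (by rw [Prod.mk.injEq]; omega), if_neg (by rw [Prod.mk.injEq]; omega),
          if_pos rfl, if_neg (by rw [Prod.mk.injEq]; omega)]
        ring
      · rw [h', if_neg (by rw [Prod.mk.injEq]; omega), if_neg (by rw [Prod.mk.injEq]; omega),
          if_neg (by rw [Prod.mk.injEq]; omega), if_pos rfl]
        ring
    · rw [if_neg h, if_neg (fun he => h (hiff.2 (Or.inl he))),
        if_neg (fun he => h (hiff.2 (Or.inr (Or.inl he)))),
        if_neg (fun he => h (hiff.2 (Or.inr (Or.inr (Or.inl he))))),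
        if_neg (fun he => h (hiff.2 (Or.inr (Or.inr (Or.inr he)))))]
      norm_num
  rw [Finset.sum_congr rfl fun v _ => hpt v]
  rw [Finset.sum_add_distrib, Finset.sum_add_distrib, Finset.sum_add_distrib,
    Finset.sum_ite_eq' _ _ w, Finset.sum_ite_eq' _ _ w, Finset.sum_ite_eq' _ _ w,
    Finset.sum_ite_eq' _ _ w]
  have hk := hker c d
  unfold Out
  dsimp only
  split_ifs <;> linarith [hk]

lemma master (hsub : S ⊆ gridBox m n)
    (hcov : ∀ v ∈ gridBox m n, ∃! u, u ∈ S ∧ latAdj v u)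
    (w : ℤ × ℤ → ℤ)
    (hker : ∀ a b : ℤ, w (a + 1, b) + w (a - 1, b) + w (a, b + 1) + w (a, b - 1) = 0) :
    (∑ v ∈ boxF m n, w v) + (∑ s ∈ TF m n S, Out m n w s) = 0 := by
  have h1 : (∑ v ∈ boxF m n, w v)
      = ∑ v ∈ boxF m n, ∑ u ∈ TF m n S, (if latAdj v u then w v else 0) := by
    refine Finset.sum_congr rfl fun v hv => ?_
    have : (∑ u ∈ TF m n S, if latAdj v u then w v else 0)
        = (∑ u ∈ TF m n S, if latAdj v u then (1:ℤ) else 0) * w v := by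
      rw [Finset.sum_mul]
      refine Finset.sum_congr rfl fun u _ => ?_
      by_cases h : latAdj v u <;> simp [h]
    rw [this, count_one hsub hcov hv, one_mul]
  rw [h1, Finset.sum_comm]
  rw [Finset.sum_congr rfl fun u _ => inner_sum w hker u]
  rw [Finset.sum_neg_distrib]
  ring

end Master

section Weights

variable {m n : ℤ} {S : Set (ℤ × ℤ)}

/-- Signed indicator of the diagonal `x + y = t`. -/
def wdiag (t : ℤ) (p : ℤ × ℤ) : ℤ := if p.1 + p.2 = t then eps p.2 else 0

/-- Signed indicator of the antidiagonal `x - y = c`. -/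
def wadiag (c : ℤ) (p : ℤ × ℤ) : ℤ := if p.1 - p.2 = c then eps p.2 else 0

lemma ker_wdiag (t : ℤ) : ∀ a b : ℤ,
    wdiag t (a + 1, b) + wdiag t (a - 1, b) + wdiag t (a, b + 1) + wdiag t (a, b - 1) = 0 := by
  intro a b
  unfold wdiag
  dsimp only
  by_cases h1 : a + b = t - 1
  · rw [if_pos (by omega), if_neg (by omega), if_pos (by omega), if_neg (by omega), eps_succ]
    ring
  · by_cases h2 : a + b = t + 1
    · rw [if_neg (by omega), if_pos (by omega), if_neg (by omega), if_pos (by omega), eps_pred]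
      ring
    · rw [if_neg (by omega), if_neg (by omega), if_neg (by omega), if_neg (by omega)]
      ring

lemma ker_wadiag (c : ℤ) : ∀ a b : ℤ,
    wadiag c (a + 1, b) + wadiag c (a - 1, b) + wadiag c (a, b + 1) + wadiag c (a, b - 1) = 0 := by
  intro a b
  unfold wadiag
  dsimp only
  by_cases h1 : a - b = c - 1
  · rw [if_pos (by omega), if_neg (by omega), if_neg (by omega), if_pos (by omega), eps_pred]
    ring
  · by_cases h2 : a - b = c + 1
    · rw [if_neg (by omega), if_pos (by omega), if_pos (by omega), if_neg (by omega), eps_succ]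
      ring
    · rw [if_neg (by omega), if_neg (by omega), if_neg (by omega), if_neg (by omega)]
      ring

lemma sum_boxF_eq (m n : ℤ) (f : ℤ × ℤ → ℤ) :
    ∑ v ∈ boxF m n, f v
      = ∑ x ∈ Finset.Icc (0:ℤ) (m-1), ∑ y ∈ Finset.Icc (0:ℤ) (n-1), f (x, y) := by
  rw [boxF]; exact Finset.sum_product _ _ _

lemma inner_diag (t x : ℤ) :
    (∑ y ∈ Finset.Icc (0:ℤ) (n-1), wdiag t (x, y))
      = if t - x ∈ Finset.Icc (0:ℤ) (n-1) then eps (t - x) else 0 := by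
  rw [← Finset.sum_ite_eq' (Finset.Icc (0:ℤ) (n-1)) (t - x) (fun y => eps y)]
  refine Finset.sum_congr rfl fun y _ => ?_
  unfold wdiag
  dsimp only
  by_cases h : y = t - x
  · rw [if_pos (by omega), if_pos h, h]
  · rw [if_neg (by omega), if_neg h]

lemma inner_adiag (c x : ℤ) :
    (∑ y ∈ Finset.Icc (0:ℤ) (n-1), wadiag c (x, y))
      = if x - c ∈ Finset.Icc (0:ℤ) (n-1) then eps (x - c) else 0 := by
  rw [← Finset.sum_ite_eq' (Finset.Icc (0:ℤ) (n-1)) (x - c) (fun y => eps y)]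
  refine Finset.sum_congr rfl fun y _ => ?_
  unfold wadiag
  dsimp only
  by_cases h : y = x - c
  · rw [if_pos (by omega), if_pos h, h]
  · rw [if_neg (by omega), if_neg h]

lemma icc_step (c : ℤ) (hc : 0 ≤ c) :
    Finset.Icc (0:ℤ) (c + 2) = insert (c + 2) (insert (c + 1) (Finset.Icc (0:ℤ) c)) := by
  ext x
  simp only [Finset.mem_Icc, Finset.mem_insert]
  omega

lemma sum_eps_nat : ∀ k : ℕ, (∑ x ∈ Finset.Icc (0:ℤ) (2 * (k:ℤ)), eps x) = 1 := by
  intro k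
  induction k with
  | zero => simp [eps]
  | succ k ih =>
    have h2 : (2 : ℤ) * ((k + 1 : ℕ) : ℤ) = (2 * (k:ℤ)) + 2 := by push_cast; ring
    rw [h2, icc_step _ (by positivity)]
    rw [Finset.sum_insert (by simp only [Finset.mem_insert, Finset.mem_Icc]; omega),
        Finset.sum_insert (by simp only [Finset.mem_Icc]; omega), ih,
        eps_of_even (by omega), eps_of_odd (by omega)]
    ring

lemma sum_eps_odd {M : ℤ} (hM : 1 ≤ M) (hodd : M % 2 = 1) :
    (∑ x ∈ Finset.Icc (0:ℤ) (M - 1), eps x) = 1 := by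
  obtain ⟨k, hk⟩ : ∃ k : ℕ, M - 1 = 2 * (k : ℤ) := ⟨((M - 1) / 2).toNat, by omega⟩
  rw [hk, sum_eps_nat]

end Weights

section OutSums

variable {m n : ℤ} {S : Set (ℤ × ℤ)}

lemma sum_out_diag (hn2 : n % 2 = 1) (t : ℤ) :
    (∑ s ∈ TF m n S, Out m n (wdiag t) s)
      = (if ((m - 1 : ℤ), t - m) ∈ TF m n S then eps (t - m) else 0)
      + (if ((0 : ℤ), t + 1) ∈ TF m n S then eps (t + 1) else 0)
      + (if ((t - n : ℤ), (n - 1 : ℤ)) ∈ TF m n S then -1 else 0)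
      + (if ((t + 1 : ℤ), (0 : ℤ)) ∈ TF m n S then -1 else 0) := by
  have hsplit : ∀ s ∈ TF m n S, Out m n (wdiag t) s
      = (if s = ((m - 1 : ℤ), t - m) then eps (t - m) else 0)
      + (if s = ((0 : ℤ), t + 1) then eps (t + 1) else 0)
      + (if s = ((t - n : ℤ), (n - 1 : ℤ)) then -1 else 0)
      + (if s = ((t + 1 : ℤ), (0 : ℤ)) then -1 else 0) := by
    intro s hs
    obtain ⟨a, b⟩ := s
    obtain ⟨⟨ha0, ha1⟩, hb0, hb1⟩ := mem_boxF.1 (mem_TF.1 hs).1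
    unfold Out wdiag
    dsimp only
    have h₁ : (if ((a + 1 : ℤ), b) ∈ boxF m n then 0 else if a + 1 + b = t then eps b else 0)
        = (if ((a : ℤ), b) = ((m - 1 : ℤ), t - m) then eps (t - m) else 0) := by
      by_cases hin : ((a + 1 : ℤ), b) ∈ boxF m n
      · rw [if_pos hin, if_neg]
        intro he
        rw [Prod.mk.injEq] at he
        rw [mem_boxF] at hin
        omega
      · rw [if_neg hin]
        rw [mem_boxF] at hin
        by_cases hbv : b = t - m
        · rw [if_pos (by omega), if_pos (by rw [Prod.mk.injEq]; omega), hbv]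
        · rw [if_neg (by omega), if_neg (by rw [Prod.mk.injEq]; omega)]
    have h₂ : (if ((a - 1 : ℤ), b) ∈ boxF m n then 0 else if a - 1 + b = t then eps b else 0)
        = (if ((a : ℤ), b) = ((0 : ℤ), t + 1) then eps (t + 1) else 0) := by
      by_cases hin : ((a - 1 : ℤ), b) ∈ boxF m n
      · rw [if_pos hin, if_neg]
        intro he
        rw [Prod.mk.injEq] at he
        rw [mem_boxF] at hin
        omega
      · rw [if_neg hin]
        rw [mem_boxF] at hin
        by_cases hbv : b = t + 1
        · rw [if_pos (by omega), if_pos (by rw [Prod.mk.injEq]; omega), hbv]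
        · rw [if_neg (by omega), if_neg (by rw [Prod.mk.injEq]; omega)]
    have h₃ : (if ((a : ℤ), b + 1) ∈ boxF m n then 0 else if a + (b + 1) = t then eps (b + 1) else 0)
        = (if ((a : ℤ), b) = ((t - n : ℤ), (n - 1 : ℤ)) then -1 else 0) := by
      by_cases hin : ((a : ℤ), b + 1) ∈ boxF m n
      · rw [if_pos hin, if_neg]
        intro he
        rw [Prod.mk.injEq] at he
        rw [mem_boxF] at hin
        omega
      · rw [if_neg hin]
        rw [mem_boxF] at hin
        by_cases hav : a = t - n
        · rw [if_pos (by omega), if_pos (by rw [Prod.mk.injEq]; omega),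
            show b + 1 = n from by omega, eps_of_odd hn2]
        · rw [if_neg (by omega), if_neg (by rw [Prod.mk.injEq]; omega)]
    have h₄ : (if ((a : ℤ), b - 1) ∈ boxF m n then 0 else if a + (b - 1) = t then eps (b - 1) else 0)
        = (if ((a : ℤ), b) = ((t + 1 : ℤ), (0 : ℤ)) then -1 else 0) := by
      by_cases hin : ((a : ℤ), b - 1) ∈ boxF m n
      · rw [if_pos hin, if_neg]
        intro he
        rw [Prod.mk.injEq] at he
        rw [mem_boxF] at hin
        omega
      · rw [if_neg hin]
        rw [mem_boxF] at hin
        by_cases hav : a = t + 1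
        · rw [if_pos (by omega), if_pos (by rw [Prod.mk.injEq]; omega),
            show b - 1 = (-1 : ℤ) from by omega, eps_of_odd (by omega)]
        · rw [if_neg (by omega), if_neg (by rw [Prod.mk.injEq]; omega)]
    rw [h₁, h₂, h₃, h₄]
  rw [Finset.sum_congr rfl hsplit, Finset.sum_add_distrib, Finset.sum_add_distrib,
    Finset.sum_add_distrib, Finset.sum_ite_eq' _ _ (fun _ => eps (t - m)),
    Finset.sum_ite_eq' _ _ (fun _ => eps (t + 1)),
    Finset.sum_ite_eq' _ _ (fun _ => (-1 : ℤ)), Finset.sum_ite_eq' _ _ (fun _ => (-1 : ℤ))]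

lemma sum_out_adiag (hn2 : n % 2 = 1) (c : ℤ) :
    (∑ s ∈ TF m n S, Out m n (wadiag c) s)
      = (if ((m - 1 : ℤ), m - c) ∈ TF m n S then eps (m - c) else 0)
      + (if ((0 : ℤ), -1 - c) ∈ TF m n S then eps (-1 - c) else 0)
      + (if ((c + n : ℤ), (n - 1 : ℤ)) ∈ TF m n S then -1 else 0)
      + (if ((c - 1 : ℤ), (0 : ℤ)) ∈ TF m n S then -1 else 0) := by
  have hsplit : ∀ s ∈ TF m n S, Out m n (wadiag c) s
      = (if s = ((m - 1 : ℤ), m - c) then eps (m - c) else 0)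
      + (if s = ((0 : ℤ), -1 - c) then eps (-1 - c) else 0)
      + (if s = ((c + n : ℤ), (n - 1 : ℤ)) then -1 else 0)
      + (if s = ((c - 1 : ℤ), (0 : ℤ)) then -1 else 0) := by
    intro s hs
    obtain ⟨a, b⟩ := s
    obtain ⟨⟨ha0, ha1⟩, hb0, hb1⟩ := mem_boxF.1 (mem_TF.1 hs).1
    unfold Out wadiag
    dsimp only
    have h₁ : (if ((a + 1 : ℤ), b) ∈ boxF m n then 0 else if a + 1 - b = c then eps b else 0)
        = (if ((a : ℤ), b) = ((m - 1 : ℤ), m - c) then eps (m - c) else 0) := by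
      by_cases hin : ((a + 1 : ℤ), b) ∈ boxF m n
      · rw [if_pos hin, if_neg]
        intro he
        rw [Prod.mk.injEq] at he
        rw [mem_boxF] at hin
        omega
      · rw [if_neg hin]
        rw [mem_boxF] at hin
        by_cases hbv : b = m - c
        · rw [if_pos (by omega), if_pos (by rw [Prod.mk.injEq]; omega), hbv]
        · rw [if_neg (by omega), if_neg (by rw [Prod.mk.injEq]; omega)]
    have h₂ : (if ((a - 1 : ℤ), b) ∈ boxF m n then 0 else if a - 1 - b = c then eps b else 0)
        = (if ((a : ℤ), b) = ((0 : ℤ), -1 - c) then eps (-1 - c) else 0) := by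
      by_cases hin : ((a - 1 : ℤ), b) ∈ boxF m n
      · rw [if_pos hin, if_neg]
        intro he
        rw [Prod.mk.injEq] at he
        rw [mem_boxF] at hin
        omega
      · rw [if_neg hin]
        rw [mem_boxF] at hin
        by_cases hbv : b = -1 - c
        · rw [if_pos (by omega), if_pos (by rw [Prod.mk.injEq]; omega), hbv]
        · rw [if_neg (by omega), if_neg (by rw [Prod.mk.injEq]; omega)]
    have h₃ : (if ((a : ℤ), b + 1) ∈ boxF m n then 0 else if a - (b + 1) = c then eps (b + 1) else 0)
        = (if ((a : ℤ), b) = ((c + n : ℤ), (n - 1 : ℤ)) then -1 else 0) := by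
      by_cases hin : ((a : ℤ), b + 1) ∈ boxF m n
      · rw [if_pos hin, if_neg]
        intro he
        rw [Prod.mk.injEq] at he
        rw [mem_boxF] at hin
        omega
      · rw [if_neg hin]
        rw [mem_boxF] at hin
        by_cases hav : a = c + n
        · rw [if_pos (by omega), if_pos (by rw [Prod.mk.injEq]; omega),
            show b + 1 = n from by omega, eps_of_odd hn2]
        · rw [if_neg (by omega), if_neg (by rw [Prod.mk.injEq]; omega)]
    have h₄ : (if ((a : ℤ), b - 1) ∈ boxF m n then 0 else if a - (b - 1) = c then eps (b - 1) else 0)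
        = (if ((a : ℤ), b) = ((c - 1 : ℤ), (0 : ℤ)) then -1 else 0) := by
      by_cases hin : ((a : ℤ), b - 1) ∈ boxF m n
      · rw [if_pos hin, if_neg]
        intro he
        rw [Prod.mk.injEq] at he
        rw [mem_boxF] at hin
        omega
      · rw [if_neg hin]
        rw [mem_boxF] at hin
        by_cases hav : a = c - 1
        · rw [if_pos (by omega), if_pos (by rw [Prod.mk.injEq]; omega),
            show b - 1 = (-1 : ℤ) from by omega, eps_of_odd (by omega)]
        · rw [if_neg (by omega), if_neg (by rw [Prod.mk.injEq]; omega)]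
    rw [h₁, h₂, h₃, h₄]
  rw [Finset.sum_congr rfl hsplit, Finset.sum_add_distrib, Finset.sum_add_distrib,
    Finset.sum_add_distrib, Finset.sum_ite_eq' _ _ (fun _ => eps (m - c)),
    Finset.sum_ite_eq' _ _ (fun _ => eps (-1 - c)),
    Finset.sum_ite_eq' _ _ (fun _ => (-1 : ℤ)), Finset.sum_ite_eq' _ _ (fun _ => (-1 : ℤ))]

lemma pack (hcov : ∀ v ∈ gridBox m n, ∃! u, u ∈ S ∧ latAdj v u)
    (a b : ℤ) (h1 : (a, b) ∈ TF m n S) (h2 : (a, b + 2) ∈ TF m n S)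
    (hmid : ((a : ℤ), b + 1) ∈ boxF m n) : False := by
  obtain ⟨u₀, _, huniq⟩ := hcov (a, b + 1) (mem_gridBox_iff.2 hmid)
  have e1 : ((a : ℤ), b) = u₀ :=
    huniq (a, b) ⟨(mem_TF.1 h1).2, latAdj_iff.2 (Or.inr (Or.inr (Or.inl ⟨rfl, rfl⟩)))⟩
  have e2 : ((a : ℤ), b + 2) = u₀ :=
    huniq (a, b + 2) ⟨(mem_TF.1 h2).2, latAdj_iff.2 (Or.inr (Or.inr (Or.inr ⟨rfl, by ring⟩)))⟩
  rw [← e2, Prod.mk.injEq] at e1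
  omega

end OutSums

section Main

variable {m n : ℤ} {S : Set (ℤ × ℤ)}

lemma E1sum (hm : 2 ≤ m) (hmn : m ≤ n) (hm2 : m % 2 = 1) (hn2 : n % 2 = 1) :
    (∑ v ∈ boxF m n, wdiag (n - 1) v) = 1 := by
  rw [sum_boxF_eq]
  have hpt : ∀ x ∈ Finset.Icc (0:ℤ) (m-1),
      (∑ y ∈ Finset.Icc (0:ℤ) (n-1), wdiag (n-1) (x, y)) = eps x := by
    intro x hx
    rw [Finset.mem_Icc] at hx
    rw [inner_diag, if_pos (by rw [Finset.mem_Icc]; omega)]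
    exact eps_even_sub (by omega) x
  rw [Finset.sum_congr rfl hpt, sum_eps_odd (by omega) hm2]

lemma E2sum (hm : 2 ≤ m) (hm2n : m + 2 ≤ n) (hm2 : m % 2 = 1) (hn2 : n % 2 = 1) :
    (∑ v ∈ boxF m n, wdiag (n - 3) v) = 1 := by
  rw [sum_boxF_eq]
  have hpt : ∀ x ∈ Finset.Icc (0:ℤ) (m-1),
      (∑ y ∈ Finset.Icc (0:ℤ) (n-1), wdiag (n-3) (x, y)) = eps x := by
    intro x hx
    rw [Finset.mem_Icc] at hx
    rw [inner_diag, if_pos (by rw [Finset.mem_Icc]; omega)]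
    exact eps_even_sub (by omega) x
  rw [Finset.sum_congr rfl hpt, sum_eps_odd (by omega) hm2]

lemma E3sum (hm3 : 3 ≤ m) (hmn : m ≤ n) (hm2 : m % 2 = 1) (hn2 : n % 2 = 1) :
    (∑ v ∈ boxF m n, wdiag (n + 1) v) = 1 := by
  rw [sum_boxF_eq]
  have hpt : ∀ x ∈ Finset.Icc (0:ℤ) (m-1),
      (∑ y ∈ Finset.Icc (0:ℤ) (n-1), wdiag (n+1) (x, y))
        = eps x - (if x = 0 then 1 else 0) - (if x = 1 then -1 else 0) := by
    intro x hx
    rw [Finset.mem_Icc] at hx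
    rw [inner_diag]
    by_cases h0 : x = 0
    · rw [if_neg (by rw [Finset.mem_Icc]; omega)]
      subst h0
      rw [if_pos rfl, if_neg (by norm_num), eps_of_even (by norm_num)]
      norm_num
    · by_cases h1 : x = 1
      · rw [if_neg (by rw [Finset.mem_Icc]; omega)]
        subst h1
        rw [if_neg (by norm_num), if_pos rfl, eps_of_odd (by norm_num)]
        norm_num
      · rw [if_pos (by rw [Finset.mem_Icc]; omega), eps_even_sub (by omega) x,
          if_neg h0, if_neg h1]
        ring
  rw [Finset.sum_congr rfl hpt, Finset.sum_sub_distrib, Finset.sum_sub_distrib,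
    sum_eps_odd (by omega) hm2,
    Finset.sum_ite_eq' _ (0:ℤ) (fun _ => (1:ℤ)), Finset.sum_ite_eq' _ (1:ℤ) (fun _ => (-1:ℤ)),
    if_pos (by rw [Finset.mem_Icc]; omega), if_pos (by rw [Finset.mem_Icc]; omega)]
  norm_num

lemma E4sum (hm : 2 ≤ m) (hn : 2 ≤ n) (hn2 : n % 2 = 1) :
    (∑ v ∈ boxF m n, wadiag (1 - n) v) = 1 := by
  rw [sum_boxF_eq]
  have hpt : ∀ x ∈ Finset.Icc (0:ℤ) (m-1),
      (∑ y ∈ Finset.Icc (0:ℤ) (n-1), wadiag (1-n) (x, y)) = if x = 0 then 1 else 0 := by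
    intro x hx
    rw [Finset.mem_Icc] at hx
    rw [inner_adiag]
    by_cases h0 : x = 0
    · subst h0
      rw [if_pos (by rw [Finset.mem_Icc]; omega), if_pos rfl, eps_of_even (by omega)]
    · rw [if_neg (by rw [Finset.mem_Icc]; omega), if_neg h0]
  rw [Finset.sum_congr rfl hpt, Finset.sum_ite_eq' _ (0:ℤ) (fun _ => (1:ℤ)),
    if_pos (by rw [Finset.mem_Icc]; omega)]

lemma noTPC (m n : ℤ) (hm : 2 ≤ m) (hmn : m ≤ n) (hm2 : m % 2 = 1) (hn2 : n % 2 = 1)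
    (S : Set (ℤ × ℤ)) (hsub : S ⊆ gridBox m n)
    (hcov : ∀ v ∈ gridBox m n, ∃! u, u ∈ S ∧ latAdj v u) : False := by
  have hm3 : 3 ≤ m := by omega
  have hn' : 2 ≤ n := le_trans hm hmn
  -- E1 : the diagonal x + y = n - 1
  have hM1 := master hsub hcov (wdiag (n-1)) (ker_wdiag (n-1))
  rw [sum_out_diag hn2 (n-1), E1sum hm hmn hm2 hn2] at hM1
  have hnot11 : ¬ (((0:ℤ), n - 1 + 1) ∈ TF m n S) := fun h => by
    have := mem_boxF.1 (mem_TF.1 h).1; omega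
  have hnot12 : ¬ (((n - 1 - n : ℤ), (n - 1 : ℤ)) ∈ TF m n S) := fun h => by
    have := mem_boxF.1 (mem_TF.1 h).1; omega
  have hnot13 : ¬ (((n - 1 + 1 : ℤ), (0:ℤ)) ∈ TF m n S) := fun h => by
    have := mem_boxF.1 (mem_TF.1 h).1; omega
  rw [if_neg hnot11, if_neg hnot12, if_neg hnot13,
    eps_of_odd (show (n - 1 - m) % 2 = 1 by omega)] at hM1
  have hr1 : ((m - 1 : ℤ), n - 1 - m) ∈ TF m n S := by
    by_contra hcon
    rw [if_neg hcon] at hM1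
    norm_num at hM1
  have hbnd := mem_boxF.1 (mem_TF.1 hr1).1
  have hm2n : m + 2 ≤ n := by omega
  -- E2 : the diagonal x + y = n - 3
  have hM2 := master hsub hcov (wdiag (n-3)) (ker_wdiag (n-3))
  rw [sum_out_diag hn2 (n-3), E2sum hm hm2n hm2 hn2] at hM2
  have hnot22 : ¬ (((n - 3 - n : ℤ), (n - 1 : ℤ)) ∈ TF m n S) := fun h => by
    have := mem_boxF.1 (mem_TF.1 h).1; omega
  have hnot23 : ¬ (((n - 3 + 1 : ℤ), (0:ℤ)) ∈ TF m n S) := fun h => by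
    have := mem_boxF.1 (mem_TF.1 h).1; omega
  rw [if_neg hnot22, if_neg hnot23,
    eps_of_odd (show (n - 3 - m) % 2 = 1 by omega),
    eps_of_odd (show (n - 3 + 1) % 2 = 1 by omega),
    show ((0:ℤ), n - 3 + 1) = ((0:ℤ), n - 2) from Prod.ext rfl (by ring)] at hM2
  have hp2 : ¬ (((m - 1 : ℤ), n - 3 - m) ∈ TF m n S) := by
    intro hcon
    refine pack hcov (m-1) (n-3-m) hcon ?_ (mem_boxF.2 (by omega))
    rw [show ((m-1:ℤ), n - 3 - m + 2) = ((m-1:ℤ), n - 1 - m) from Prod.ext rfl (by ring)]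
    exact hr1
  have hq1 : ((0:ℤ), n - 2) ∈ TF m n S := by
    by_contra hcon
    rw [if_neg hp2, if_neg hcon] at hM2
    norm_num at hM2
  -- E4 : the antidiagonal x - y = 1 - n
  have hM4 := master hsub hcov (wadiag (1-n)) (ker_wadiag (1-n))
  rw [sum_out_adiag hn2 (1-n), E4sum hm hn' hn2] at hM4
  have hnot41 : ¬ (((m - 1 : ℤ), m - (1 - n)) ∈ TF m n S) := fun h => by
    have := mem_boxF.1 (mem_TF.1 h).1; omega
  have hnot44 : ¬ (((1 - n - 1 : ℤ), (0:ℤ)) ∈ TF m n S) := fun h => by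
    have := mem_boxF.1 (mem_TF.1 h).1; omega
  rw [if_neg hnot41, if_neg hnot44,
    eps_of_odd (show (-1 - (1 - n)) % 2 = 1 by omega),
    show ((0:ℤ), -1 - (1 - n)) = ((0:ℤ), n - 2) from Prod.ext rfl (by ring),
    show ((1 - n + n : ℤ), (n - 1 : ℤ)) = ((1:ℤ), n - 1) from Prod.ext (by ring) rfl,
    if_pos hq1] at hM4
  have hq2 : ¬ (((1:ℤ), n - 1) ∈ TF m n S) := by
    intro hcon
    rw [if_pos hcon] at hM4
    norm_num at hM4
  -- E3 : the diagonal x + y = n + 1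
  have hM3 := master hsub hcov (wdiag (n+1)) (ker_wdiag (n+1))
  rw [sum_out_diag hn2 (n+1), E3sum hm3 hmn hm2 hn2] at hM3
  have hnot32 : ¬ (((0:ℤ), n + 1 + 1) ∈ TF m n S) := fun h => by
    have := mem_boxF.1 (mem_TF.1 h).1; omega
  have hnot33 : ¬ (((n + 1 + 1 : ℤ), (0:ℤ)) ∈ TF m n S) := fun h => by
    have := mem_boxF.1 (mem_TF.1 h).1; omega
  rw [if_neg hnot32, if_neg hnot33,
    eps_of_odd (show (n + 1 - m) % 2 = 1 by omega),
    show ((n + 1 - n : ℤ), (n - 1 : ℤ)) = ((1:ℤ), n - 1) from Prod.ext (by ring) rfl,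
    if_neg hq2] at hM3
  have hp3 : ((m - 1 : ℤ), n + 1 - m) ∈ TF m n S := by
    by_contra hcon
    rw [if_neg hcon] at hM3
    norm_num at hM3
  refine pack hcov (m-1) (n-1-m) hr1 ?_ (mem_boxF.2 (by omega))
  rw [show ((m-1:ℤ), n - 1 - m + 2) = ((m-1:ℤ), n + 1 - m) from Prod.ext rfl (by ring)]
  exact hp3

end Main

end TPC8

theorem stmt_8 (m n : ℤ) (hm : 2 ≤ m) (hn : 2 ≤ n)
    (hTPC : ∃ S : Set (ℤ × ℤ), S ⊆ gridBox m n ∧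
      ∀ v ∈ gridBox m n, ∃! u, u ∈ S ∧ latAdj v u) :
    Even (m * n) := by
  by_contra hodd
  rw [Int.even_mul, not_or] at hodd
  obtain ⟨hm1, hn1⟩ := hodd
  rw [Int.not_even_iff] at hm1 hn1
  obtain ⟨S, hsub, hcov⟩ := hTPC
  rcases le_total m n with h | h
  · exact TPC8.noTPC m n hm h hm1 hn1 S hsub hcov
  · refine TPC8.noTPC n m hn h hn1 hm1 (Prod.swap ⁻¹' S) ?_ ?_
    · intro p hp
      have hps : ((p.2, p.1) : ℤ × ℤ) ∈ gridBox m n := hsub hp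
      rw [gridBox, Set.mem_prod] at hps ⊢
      exact ⟨hps.2, hps.1⟩
    · intro v hv
      have hv' : ((v.2, v.1) : ℤ × ℤ) ∈ gridBox m n := by
        rw [gridBox, Set.mem_prod] at hv ⊢
        exact ⟨hv.2, hv.1⟩
      obtain ⟨u, ⟨huS, huadj⟩, huniq⟩ := hcov (v.2, v.1) hv'
      refine ⟨(u.2, u.1), ⟨?_, ?_⟩, ?_⟩
      · show Prod.swap (u.2, u.1) ∈ S
        simpa using huS
      · have h' : |v.2 - u.1| + |v.1 - u.2| = 1 := huadj
        show |v.1 - u.2| + |v.2 - u.1| = 1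
        linarith
      · rintro y ⟨hyS, hyadj⟩
        have hadj' : latAdj (v.2, v.1) (y.2, y.1) := by
          have h' : |v.1 - y.1| + |v.2 - y.2| = 1 := hyadj
          show |v.2 - y.2| + |v.1 - y.1| = 1
          linarith
        have hkey : ((y.2, y.1) : ℤ × ℤ) = u := huniq (y.2, y.1) ⟨hyS, hadj'⟩
        rw [← hkey]
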